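/- Let γ be an automorphism of a von Neumann algebra A preserving a von Neumann subalgebra B, with canonical implementations u_A(γ) on L²(A) and u_B(γ) on L²(B). Then: (i) p ∘ u_A(γ) = u_B(γ) ∘ p on L²(A)⁺, where p : L²(A)⁺ → L²(B)⁺ is the restriction map on square roots of states; (ii) for any normal conditional expectation E : A → B, q_{γ·E} = u_A(γ) ∘ q_E ∘ u_B(γ)*, where γ·E = γ∘E∘γ⁻¹. -/

import Mathlib

open scoped ComplexOrder

/-- A standard form of a von Neumann algebra `M ⊆ B(H)`. -/
structure StandardForm {H : Type*} [NormedAddCommGroup H] [InnerProductSpace ℂ H]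
    [CompleteSpace H] (M : VonNeumannAlgebra H) where
  J : H ≃ₗᵢ⋆[ℂ] H
  P : Set H
  J_involutive : ∀ ξ : H, J (J ξ) = ξ
  selfDual : ∀ ξ : H, ξ ∈ P ↔ ∀ η ∈ P, 0 ≤ (inner ℂ ξ η : ℂ)
  J_fix : ∀ ξ ∈ P, J ξ = ξ
  JMJ_commutant : ∀ x ∈ M, ∃ y ∈ M.commutant, ∀ ξ : H, J (x (J ξ)) = y ξ
  commutant_JMJ : ∀ y ∈ M.commutant, ∃ x ∈ M, ∀ ξ : H, J (x (J ξ)) = y ξ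
  cone_stable : ∀ x ∈ M, ∀ ξ ∈ P, x (J (x (J ξ))) ∈ P

noncomputable section Aux

open ContinuousLinearMap

variable {H : Type*} [NormedAddCommGroup H] [InnerProductSpace ℂ H] [CompleteSpace H]
  {M : VonNeumannAlgebra H}

local notation "⟪" x ", " y "⟫" => (inner ℂ x y : ℂ)

namespace StandardForm

variable (sf : StandardForm M)

lemma inner_nonneg {ξ η : H} (hξ : ξ ∈ sf.P) (hη : η ∈ sf.P) : 0 ≤ ⟪ξ, η⟫ :=
  (sf.selfDual ξ).mp hξ η hη

lemma inner_im_zero {ξ η : H} (hξ : ξ ∈ sf.P) (hη : η ∈ sf.P) : (⟪ξ, η⟫).im = 0 :=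
  ((Complex.nonneg_iff).mp (sf.inner_nonneg hξ hη)).2.symm

lemma inner_re_nonneg {ξ η : H} (hξ : ξ ∈ sf.P) (hη : η ∈ sf.P) : 0 ≤ (⟪ξ, η⟫).re :=
  ((Complex.nonneg_iff).mp (sf.inner_nonneg hξ hη)).1

lemma zero_mem : (0 : H) ∈ sf.P :=
  (sf.selfDual 0).mpr fun η _ => by simp

lemma add_mem {ξ η : H} (hξ : ξ ∈ sf.P) (hη : η ∈ sf.P) : ξ + η ∈ sf.P :=
  (sf.selfDual _).mpr fun w hw => by
    rw [inner_add_left]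
    exact add_nonneg (sf.inner_nonneg hξ hw) (sf.inner_nonneg hη hw)

lemma isClosed : IsClosed sf.P := by
  have h1 : ∀ η : H, IsClosed {ξ : H | 0 ≤ ⟪ξ, η⟫} := by
    intro η
    have : {ξ : H | 0 ≤ ⟪ξ, η⟫} = {ξ : H | 0 ≤ (⟪ξ, η⟫).re} ∩ {ξ : H | (⟪ξ, η⟫).im = 0} := by
      ext ξ; simp [Complex.nonneg_iff, eq_comm]
    rw [this]
    have hc : Continuous fun ξ : H => ⟪ξ, η⟫ := continuous_id.inner continuous_const
    exact ((isClosed_le continuous_const (Complex.continuous_re.comp hc)).inter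
      (isClosed_eq (Complex.continuous_im.comp hc) continuous_const))
  have : sf.P = ⋂ (η : H) (_ : η ∈ sf.P), {ξ : H | 0 ≤ ⟪ξ, η⟫} := by
    ext ξ
    simp only [Set.mem_iInter, Set.mem_setOf_eq]
    exact sf.selfDual ξ
  rw [this]
  exact isClosed_iInter fun η => isClosed_iInter fun _ => h1 η

lemma convex : Convex ℝ sf.P := by
  intro x hx y hy a b ha hb _
  refine (sf.selfDual _).mpr fun w hw => ?_
  have : (a • x + b • y : H) = (a : ℂ) • x + (b : ℂ) • y := by
    rw [Complex.coe_smul, Complex.coe_smul]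
  rw [this, inner_add_left, inner_smul_left, inner_smul_left]
  rw [Complex.nonneg_iff] at *
  have h1 := (Complex.nonneg_iff).mp (sf.inner_nonneg hx hw)
  have h2 := (Complex.nonneg_iff).mp (sf.inner_nonneg hy hw)
  constructor
  · simp only [Complex.add_re, Complex.mul_re, Complex.conj_re, Complex.conj_im,
      Complex.ofReal_re, Complex.ofReal_im]
    rw [← h1.2, ← h2.2]
    simp only [neg_zero, mul_zero, zero_mul, sub_zero]
    exact add_nonneg (mul_nonneg ha h1.1) (mul_nonneg hb h2.1)
  · simp only [Complex.add_im, Complex.mul_im, Complex.conj_re, Complex.conj_im,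
      Complex.ofReal_re, Complex.ofReal_im]
    rw [← h1.2, ← h2.2]
    ring

lemma moreau (ζ : H) (him : ∀ w ∈ sf.P, (⟪ζ, w⟫).im = 0) :
    ∃ ζ₁ ζ₂ : H, ζ₁ ∈ sf.P ∧ ζ₂ ∈ sf.P ∧ ζ = ζ₁ - ζ₂ ∧ ⟪ζ₁, ζ₂⟫ = 0 := by
  letI : InnerProductSpace ℝ H := InnerProductSpace.complexToReal
  obtain ⟨v, hv, hmin⟩ := exists_norm_eq_iInf_of_complete_convex ⟨0, sf.zero_mem⟩
      (sf.isClosed.isComplete) sf.convex ζ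
  rw [norm_eq_iInf_iff_real_inner_le_zero sf.convex hv] at hmin
  have hre : ∀ x y : H, (inner ℝ x y : ℝ) = (⟪x, y⟫).re := fun x y => rfl
  have h0 : (⟪ζ - v, v⟫).re ≥ 0 := by
    have := hmin 0 sf.zero_mem
    rw [hre] at this
    simp only [zero_sub, inner_neg_right] at this
    simp at this; exact this
  have h2 : (⟪ζ - v, v⟫).re ≤ 0 := by
    have := hmin (v + v) (sf.add_mem hv hv)
    rw [hre] at this
    simpa using this
  have hv0 : (⟪ζ - v, v⟫).re = 0 := le_antisymm h2 h0
  refine ⟨v, v - ζ, hv, ?_, by abel, ?_⟩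
  · refine (sf.selfDual _).mpr fun w hw => ?_
    rw [Complex.nonneg_iff]
    constructor
    · have hww := hmin w hw
      rw [hre] at hww
      have : (⟪ζ - v, w - v⟫).re = (⟪ζ - v, w⟫).re - (⟪ζ - v, v⟫).re := by
        rw [inner_sub_right, Complex.sub_re]
      rw [this, hv0, sub_zero] at hww
      have : ⟪v - ζ, w⟫ = -⟪ζ - v, w⟫ := by
        rw [← inner_neg_left]; congr 1; abel
      rw [this]; simpa using hww
    · have : ⟪v - ζ, w⟫ = ⟪v, w⟫ - ⟪ζ, w⟫ := by rw [inner_sub_left]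
      rw [this]
      simp [Complex.sub_im, sf.inner_im_zero hv hw, him w hw]
  · have him1 : (⟪v, v - ζ⟫).im = 0 := by
      rw [inner_sub_right]
      have hvζ : (⟪v, ζ⟫).im = 0 := by
        have h := him v hv
        have e : ⟪v, ζ⟫ = (starRingEnd ℂ) ⟪ζ, v⟫ := (inner_conj_symm _ _).symm
        rw [e, Complex.conj_im, h, neg_zero]
      simp only [Complex.sub_im, sf.inner_im_zero hv hv, hvζ, sub_zero]
    have hre1 : (⟪v, v - ζ⟫).re = 0 := by
      have e : ⟪v, v - ζ⟫ = (starRingEnd ℂ) (-(⟪ζ - v, v⟫)) := by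
        rw [← inner_conj_symm]
        congr 1
        rw [← inner_neg_left]
        congr 1
        abel
      rw [e, map_neg, Complex.neg_re, Complex.conj_re, hv0, neg_zero]
    exact Complex.ext hre1 him1

lemma commutant_cone {y : H →L[ℂ] H} (hy : y ∈ M.commutant) {ρ : H} (hρ : ρ ∈ sf.P) :
    y (sf.J (y ρ)) ∈ sf.P := by
  obtain ⟨x, hx, hxy⟩ := sf.commutant_JMJ y hy
  have e1 : sf.J (x ρ) = y ρ := by
    have := hxy ρ
    rwa [sf.J_fix ρ hρ] at this
  have e2 : sf.J (y ρ) = x ρ := by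
    rw [← e1, sf.J_involutive]
  rw [e2, ← hxy (x ρ)]
  have hst : x (sf.J (x ρ)) ∈ sf.P := by
    have := sf.cone_stable x hx ρ hρ
    rwa [sf.J_fix ρ hρ] at this
  rw [sf.J_fix _ hst]
  exact hst

lemma orth_commutant {ζ₁ ζ₂ : H} (h₁ : ζ₁ ∈ sf.P) (h₂ : ζ₂ ∈ sf.P)
    (h0 : ⟪ζ₂, ζ₁⟫ = 0) {y : H →L[ℂ] H} (hy : y ∈ M.commutant) : ⟪ζ₂, y ζ₁⟫ = 0 := by
  -- For any y' in the commutant, the "cross term" vanishes.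
  have hmemsmul : ∀ (c : ℂ) (y' : H →L[ℂ] H), y' ∈ M.commutant →
      ((c • y' + 1 : H →L[ℂ] H) ∈ M.commutant) := by
    intro c y' hy'
    rw [VonNeumannAlgebra.mem_commutant_iff] at hy' ⊢
    intro g hg
    rw [mul_add, add_mul, mul_one, one_mul, mul_smul_comm, smul_mul_assoc, hy' g hg]
  have key : ∀ (y' : H →L[ℂ] H), y' ∈ M.commutant → ∀ t : ℝ,
      0 ≤ (t : ℂ) ^ 2 * ⟪ζ₂, y' (sf.J (y' ζ₁))⟫ +
        (t : ℂ) * (⟪ζ₂, y' ζ₁⟫ + ⟪ζ₂, sf.J (y' ζ₁)⟫) := by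
    intro y' hy' t
    set z : H →L[ℂ] H := (t : ℂ) • y' + 1 with hz
    have hzmem : z ∈ M.commutant := hmemsmul _ _ hy'
    have hpos := sf.inner_nonneg h₂ (sf.commutant_cone hzmem h₁)
    have e1 : z ζ₁ = (t : ℂ) • (y' ζ₁) + ζ₁ := by
      simp [hz, ContinuousLinearMap.add_apply, ContinuousLinearMap.smul_apply]
    have e2 : sf.J (z ζ₁) = (t : ℂ) • sf.J (y' ζ₁) + ζ₁ := by
      rw [e1, map_add, LinearIsometryEquiv.map_smulₛₗ]
      rw [sf.J_fix ζ₁ h₁]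
      congr 1
      simp [Complex.conj_ofReal]
    have e3 : z (sf.J (z ζ₁)) = (t : ℂ)^2 • (y' (sf.J (y' ζ₁))) + (t : ℂ) • (y' ζ₁)
        + ((t : ℂ) • sf.J (y' ζ₁) + ζ₁) := by
      rw [e2]
      simp only [hz, ContinuousLinearMap.add_apply, ContinuousLinearMap.smul_apply,
        ContinuousLinearMap.one_apply, map_add, map_smul]
      rw [smul_add, smul_smul]
      rw [show (t:ℂ) * (t:ℂ) = (t:ℂ)^2 by ring]
      abel
    calc (0 : ℂ) ≤ ⟪ζ₂, z (sf.J (z ζ₁))⟫ := hpos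
      _ = (t : ℂ) ^ 2 * ⟪ζ₂, y' (sf.J (y' ζ₁))⟫ +
            (t : ℂ) * (⟪ζ₂, y' ζ₁⟫ + ⟪ζ₂, sf.J (y' ζ₁)⟫) := by
          rw [e3]
          simp only [inner_add_right, inner_smul_right, h0]
          ring
  have hBzero : ∀ (y' : H →L[ℂ] H), y' ∈ M.commutant →
      ⟪ζ₂, y' ζ₁⟫ + ⟪ζ₂, sf.J (y' ζ₁)⟫ = 0 := by
    intro y' hy'
    set A : ℂ := ⟪ζ₂, y' (sf.J (y' ζ₁))⟫ with hA
    set B : ℂ := ⟪ζ₂, y' ζ₁⟫ + ⟪ζ₂, sf.J (y' ζ₁)⟫ with hB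
    have hApos : 0 ≤ A := sf.inner_nonneg h₂ (sf.commutant_cone hy' h₁)
    have hAim : A.im = 0 := ((Complex.nonneg_iff).mp hApos).2.symm
    have hAre : 0 ≤ A.re := ((Complex.nonneg_iff).mp hApos).1
    have hkey := key y' hy'
    have hkey' : ∀ t : ℝ, 0 ≤ ((t^2 : ℝ) : ℂ) * A + (t : ℂ) * B := by
      intro t
      have h := hkey t
      have e : ((t : ℂ))^2 = ((t^2 : ℝ) : ℂ) := by push_cast; ring
      rwa [e] at h
    have hBim : B.im = 0 := by
      have h1 := ((Complex.nonneg_iff).mp (hkey' 1)).2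
      rw [Complex.add_im, Complex.im_ofReal_mul, Complex.im_ofReal_mul] at h1
      simp only [one_pow, Complex.ofReal_one, one_mul, hAim, mul_zero, zero_add] at h1
      linarith
    have hBre : B.re = 0 := by
      have hq : ∀ t : ℝ, 0 ≤ A.re * t^2 + B.re * t := by
        intro t
        have h := ((Complex.nonneg_iff).mp (hkey' t)).1
        rw [Complex.add_re, Complex.re_ofReal_mul, Complex.re_ofReal_mul] at h
        linarith
      set a := A.re with ha'
      set b := B.re with hb'
      by_contra hbne
      have hb2 : 0 < b^2 := by positivity
      have hpos : (0:ℝ) < a + 1 := by linarith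
      have h := hq (-b/(a+1))
      have e : a * (-b/(a+1))^2 + b * (-b/(a+1)) = -(b^2) * (1/(a+1)^2) := by
        field_simp
        ring
      have h' : 0 ≤ -(b^2) * (1/(a+1)^2) := by rw [← e]; exact h
      have hinv : 0 < 1/(a+1)^2 := by positivity
      nlinarith
    rw [Complex.ext_iff]
    simp [hBre, hBim]
  have hI : (Complex.I • y) ∈ M.commutant := by
    rw [VonNeumannAlgebra.mem_commutant_iff] at hy ⊢
    intro g hg
    rw [mul_smul_comm, smul_mul_assoc, hy g hg]
  have hB1 := hBzero y hy
  have hB2 := hBzero (Complex.I • y) hI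
  have e1 : (Complex.I • y) ζ₁ = Complex.I • (y ζ₁) := rfl
  have e2 : sf.J (Complex.I • (y ζ₁)) = (-Complex.I) • sf.J (y ζ₁) := by
    rw [LinearIsometryEquiv.map_smulₛₗ]
    congr 1
    simp [Complex.conj_I]
  rw [e1, e2, inner_smul_right, inner_smul_right] at hB2
  linear_combination hB1 / 2 - Complex.I / 2 * hB2 +
    ((⟪ζ₂, y ζ₁⟫ - ⟪ζ₂, sf.J (y ζ₁)⟫) / 2) * Complex.I_sq

lemma span_cone_dense_aux {w : H} (hw : ∀ η ∈ sf.P, ⟪η, w⟫ = 0) : w = 0 := by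
  have hwP : w ∈ sf.P := (sf.selfDual w).mpr fun η hη => by
    have : ⟪w, η⟫ = 0 := by
      rw [← inner_conj_symm, hw η hη, map_zero]
    rw [this]
  have : ⟪w, w⟫ = 0 := by
    rw [← inner_conj_symm, hw w hwP, map_zero]
  exact inner_self_eq_zero.mp this

lemma ext_of_agree_on_cone {F : Type*} [NormedAddCommGroup F] [NormedSpace ℂ F]
    (f g : H →L[ℂ] F) (h : ∀ ξ ∈ sf.P, f ξ = g ξ) : f = g := by
  set W : Submodule ℂ H := (Submodule.span ℂ sf.P).topologicalClosure with hW
  haveI : CompleteSpace W := (Submodule.span ℂ sf.P).isClosed_topologicalClosure.completeSpace_coe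
  have hWtop : W = ⊤ := by
    rw [← Submodule.orthogonal_eq_bot_iff, Submodule.eq_bot_iff]
    intro w hww
    refine sf.span_cone_dense_aux fun η hη => ?_
    exact (Submodule.mem_orthogonal W w).mp hww η
      (Submodule.le_topologicalClosure _ (Submodule.subset_span hη))
  have hker : W ≤ LinearMap.ker ((f - g : H →L[ℂ] F) : H →ₗ[ℂ] F) := by
    refine Submodule.topologicalClosure_minimal _ ?_ ?_
    · rw [Submodule.span_le]
      intro ξ hξ
      simp only [SetLike.mem_coe, LinearMap.mem_ker]
      show f ξ - g ξ = 0
      rw [h ξ hξ, sub_self]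
    · exact ContinuousLinearMap.isClosed_ker (f - g)
  ext v
  have hv : v ∈ LinearMap.ker ((f - g : H →L[ℂ] F) : H →ₗ[ℂ] F) := hker (hWtop ▸ Submodule.mem_top)
  have : f v - g v = 0 := hv
  exact sub_eq_zero.mp this

set_option maxHeartbeats 1000000 in
lemma unique {ξ η : H} (hξ : ξ ∈ sf.P) (hη : η ∈ sf.P)
    (hstate : ∀ z ∈ M, ⟪ξ, z ξ⟫ = ⟪η, z η⟫) : ξ = η := by
  obtain ⟨ζ₁, ζ₂, h₁, h₂, hz, horth⟩ := sf.moreau (ξ - η) (fun w hw => by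
    rw [inner_sub_left, Complex.sub_im, sf.inner_im_zero hξ hw, sf.inner_im_zero hη hw, sub_zero])
  have horth' : ⟪ζ₂, ζ₁⟫ = 0 := by
    rw [← inner_conj_symm, horth, map_zero]
  have horthAll : ∀ y ∈ M.commutant, ⟪ζ₂, y ζ₁⟫ = 0 := fun y hy =>
    sf.orth_commutant h₁ h₂ horth' hy
  -- the projection onto the closure of the commutant orbit of ζ₁
  set S : Set H := {v : H | ∃ y ∈ M.commutant, v = y ζ₁} with hS
  set K : Submodule ℂ H := (Submodule.span ℂ S).topologicalClosure with hK
  haveI : CompleteSpace K := (Submodule.span ℂ S).isClosed_topologicalClosure.completeSpace_coe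
  set pc : H →L[ℂ] H := K.subtypeL.comp (K.orthogonalProjectionOnto) with hpc
  have hpc_apply : ∀ v : H, pc v = (K.orthogonalProjectionOnto v : H) := fun v => rfl
  have hζ₁K : ζ₁ ∈ K := by
    refine Submodule.le_topologicalClosure _ (Submodule.subset_span ?_)
    exact ⟨1, one_mem _, (ContinuousLinearMap.one_apply ζ₁).symm⟩
  have hζ₂K : ζ₂ ∈ Kᗮ := by
    have hUK : ∀ w ∈ K, ⟪ζ₂, w⟫ = 0 := by
      have hker : K ≤ LinearMap.ker ((innerSL ℂ ζ₂ : H →L[ℂ] ℂ) : H →ₗ[ℂ] ℂ) := by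
        refine Submodule.topologicalClosure_minimal _ ?_ (ContinuousLinearMap.isClosed_ker _)
        rw [Submodule.span_le]
        rintro v ⟨y, hy, rfl⟩
        simp only [SetLike.mem_coe, LinearMap.mem_ker, innerSL_apply_apply]
        exact horthAll y hy
      intro w hw
      exact hker hw
    rw [Submodule.mem_orthogonal]
    intro u hu
    rw [← inner_conj_symm, hUK u hu, map_zero]
  have hKinv : ∀ y : H →L[ℂ] H, y ∈ M.commutant → ∀ u ∈ K, y u ∈ K := by
    intro y hy
    have hcomap : K ≤ Submodule.comap (y : H →ₗ[ℂ] H) K := by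
      refine Submodule.topologicalClosure_minimal _ ?_ ?_
      · rw [Submodule.span_le]
        rintro v ⟨y', hy', rfl⟩
        simp only [SetLike.mem_coe, Submodule.mem_comap]
        show y (y' ζ₁) ∈ K
        refine Submodule.le_topologicalClosure _ (Submodule.subset_span ?_)
        exact ⟨y * y', mul_mem hy hy', (ContinuousLinearMap.mul_apply y y' ζ₁).symm⟩
      · have : (Submodule.comap (y : H →ₗ[ℂ] H) K : Set H) = (y : H → H) ⁻¹' (K : Set H) := rfl
        rw [this]
        exact IsClosed.preimage y.continuous (Submodule.span ℂ S).isClosed_topologicalClosure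
    intro u hu
    exact hcomap hu
  have hstarmem : ∀ y : H →L[ℂ] H, y ∈ M.commutant →
      ContinuousLinearMap.adjoint y ∈ M.commutant := by
    intro y hy
    rw [← ContinuousLinearMap.star_eq_adjoint]
    exact star_mem hy
  have hpcomm : ∀ y : H →L[ℂ] H, y ∈ M.commutant → ∀ v : H, pc (y v) = y (pc v) := by
    intro y hy v
    have h1 : y (pc v) ∈ K := hKinv y hy _ (by rw [hpc_apply]; exact (K.orthogonalProjectionOnto v).2)
    have h2 : y v - y (pc v) ∈ Kᗮ := by
      rw [Submodule.mem_orthogonal]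
      intro u hu
      have e : y v - y (pc v) = y (v - pc v) := by rw [map_sub]
      rw [e, ← ContinuousLinearMap.adjoint_inner_left]
      have hvK : v - pc v ∈ Kᗮ := by
        rw [hpc_apply]
        exact Submodule.sub_starProjection_mem_orthogonal (K := K) v
      exact (Submodule.mem_orthogonal _ _).mp hvK _ (hKinv _ (hstarmem y hy) _ hu)
    rw [hpc_apply]
    exact Submodule.eq_starProjection_of_mem_orthogonal (K := K) h1 h2
  have hpM : pc ∈ M := by
    have hc : pc ∈ Set.centralizer (Set.centralizer (M : Set (H →L[ℂ] H))) := by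
      rw [Set.mem_centralizer_iff]
      intro y hy
      have hy' : y ∈ M.commutant := by
        rw [← SetLike.mem_coe, VonNeumannAlgebra.coe_commutant]
        exact hy
      ext v
      rw [ContinuousLinearMap.mul_apply, ContinuousLinearMap.mul_apply]
      exact (hpcomm y hy' v).symm
    rw [← SetLike.mem_coe, ← VonNeumannAlgebra.centralizer_centralizer M]
    exact hc
  -- pc ζ = ζ₁
  have hpζ₁ : pc ζ₁ = ζ₁ := by
    rw [hpc_apply]
    exact Submodule.starProjection_eq_self_iff.mpr hζ₁K
  have hpζ₂ : pc ζ₂ = 0 := by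
    rw [hpc_apply, Submodule.orthogonalProjectionOnto_apply_of_mem_orthogonal hζ₂K]
    rfl
  have hpζ : pc (ξ - η) = ζ₁ := by
    rw [hz, map_sub, hpζ₁, hpζ₂, sub_zero]
  -- now the arithmetic
  set s : H := ξ + η with hs
  have hns : ∀ v : H, (⟪v, v⟫).re = ‖v‖ ^ 2 := fun v => by
    have h := inner_self_eq_norm_sq (𝕜 := ℂ) v
    simpa using h
  have hnorm₁ : (⟪ζ₁, ζ₁⟫).re = ‖ζ₁‖ ^ 2 := hns ζ₁
  have hnorm₂ : (⟪ζ₂, ζ₂⟫).re = ‖ζ₂‖ ^ 2 := hns ζ₂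
  have horthre : (⟪ζ₂, ζ₁⟫).re = 0 := by rw [horth']; rfl
  have horthre' : (⟪ζ₁, ζ₂⟫).re = 0 := by rw [horth]; rfl
  have e1 : (⟪s, ζ₁⟫).re ≥ ‖ζ₁‖ ^ 2 := by
    have hv : s = (η + η) + (ξ - η) := by rw [hs]; abel
    have : ⟪s, ζ₁⟫ = ⟪η + η, ζ₁⟫ + ⟪ξ - η, ζ₁⟫ := by rw [hv, inner_add_left]
    rw [this, Complex.add_re]
    have h2' : ⟪ξ - η, ζ₁⟫ = ⟪ζ₁, ζ₁⟫ - ⟪ζ₂, ζ₁⟫ := by rw [hz, inner_sub_left]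
    have hge := sf.inner_re_nonneg (sf.add_mem hη hη) h₁
    rw [h2', Complex.sub_re, hnorm₁, horthre, sub_zero]
    linarith
  have e2 : (⟪s, ζ₂⟫).re ≥ ‖ζ₂‖ ^ 2 := by
    have hv : s = (ξ + ξ) - (ξ - η) := by rw [hs]; abel
    have : ⟪s, ζ₂⟫ = ⟪ξ + ξ, ζ₂⟫ - ⟪ξ - η, ζ₂⟫ := by rw [hv, inner_sub_left]
    rw [this, Complex.sub_re]
    have h2' : ⟪ξ - η, ζ₂⟫ = ⟪ζ₁, ζ₂⟫ - ⟪ζ₂, ζ₂⟫ := by rw [hz, inner_sub_left]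
    have hge := sf.inner_re_nonneg (sf.add_mem hξ hξ) h₂
    rw [h2', Complex.sub_re, hnorm₂, horthre']
    linarith
  have e3 : (⟪s, ζ₁⟫).re + (⟪s, ζ₂⟫).re = 0 := by
    have hsum : ζ₁ + ζ₂ = (2 : ℂ) • (pc (ξ - η)) - (ξ - η) := by
      rw [hpζ, hz, two_smul]
      abel
    have hh : ⟪s, ζ₁⟫ + ⟪s, ζ₂⟫ = 2 * ⟪s, pc (ξ - η)⟫ - ⟪s, ξ - η⟫ := by
      rw [← inner_add_right, hsum, inner_sub_right, inner_smul_right]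
    have hpart1 : (⟪s, pc (ξ - η)⟫).re = 0 := by
      have hx : ⟪s, pc (ξ - η)⟫ = ⟪ξ, pc ξ⟫ - ⟪η, pc η⟫ + (⟪η, pc ξ⟫ - ⟪ξ, pc η⟫) := by
        rw [hs, map_sub, inner_add_left, inner_sub_right, inner_sub_right]
        ring
      have hcancel : ⟪ξ, pc ξ⟫ = ⟪η, pc η⟫ := hstate pc hpM
      have hconj : ⟪ξ, pc η⟫ = (starRingEnd ℂ) ⟪η, pc ξ⟫ := by
        rw [← inner_conj_symm]
        congr 1
        rw [hpc_apply, hpc_apply]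
        exact Submodule.inner_starProjection_left_eq_right K η ξ
      rw [hx, hcancel, sub_self, zero_add, hconj, Complex.sub_re, Complex.conj_re, sub_self]
    have hpart2 : (⟪s, ξ - η⟫).re = 0 := by
      have hx : ⟪s, ξ - η⟫ = ⟪ξ, ξ⟫ - ⟪η, η⟫ + (⟪η, ξ⟫ - ⟪ξ, η⟫) := by
        rw [hs, inner_add_left, inner_sub_right, inner_sub_right]
        ring
      have hcancel : ⟪ξ, ξ⟫ = ⟪η, η⟫ := by
        have := hstate 1 (one_mem M)
        simpa using this
      have hconj : ⟪ξ, η⟫ = (starRingEnd ℂ) ⟪η, ξ⟫ := (inner_conj_symm _ _).symm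
      rw [hx, hcancel, sub_self, zero_add, hconj, Complex.sub_re, Complex.conj_re, sub_self]
    have hre : (⟪s, ζ₁⟫ + ⟪s, ζ₂⟫).re = (2 * ⟪s, pc (ξ - η)⟫ - ⟪s, ξ - η⟫).re := by rw [hh]
    rw [Complex.add_re] at hre
    rw [hre, Complex.sub_re, Complex.mul_re, hpart1, hpart2]
    norm_num
  have hn1 : ‖ζ₁‖ ^ 2 = 0 := by nlinarith [sq_nonneg ‖ζ₁‖, sq_nonneg ‖ζ₂‖]
  have hn2 : ‖ζ₂‖ ^ 2 = 0 := by nlinarith [sq_nonneg ‖ζ₁‖, sq_nonneg ‖ζ₂‖]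
  have hζ₁0 : ζ₁ = 0 := by
    have : ‖ζ₁‖ = 0 := by nlinarith [norm_nonneg ζ₁]
    exact norm_eq_zero.mp this
  have hζ₂0 : ζ₂ = 0 := by
    have : ‖ζ₂‖ = 0 := by nlinarith [norm_nonneg ζ₂]
    exact norm_eq_zero.mp this
  have : ξ - η = 0 := by rw [hz, hζ₁0, hζ₂0, sub_zero]
  exact sub_eq_zero.mp this

lemma conj_inv_mem (uA uAi : H →L[ℂ] H)
    (huA1 : uA * uAi = 1) (huA2 : uAi * uA = 1)
    (huAJ : ∀ ξ : H, uA (sf.J ξ) = sf.J (uA ξ))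
    (hγ : ∀ a ∈ M, uA * a * uAi ∈ M) {a : H →L[ℂ] H} (ha : a ∈ M) :
    uAi * a * uA ∈ M := by
  have hA1 : ∀ v : H, uA (uAi v) = v := fun v => by
    have : (uA * uAi) v = (1 : H →L[ℂ] H) v := by rw [huA1]
    simpa using this
  have hA2 : ∀ v : H, uAi (uA v) = v := fun v => by
    have : (uAi * uA) v = (1 : H →L[ℂ] H) v := by rw [huA2]
    simpa using this
  have huAiJ : ∀ w : H, uAi (sf.J w) = sf.J (uAi w) := by
    intro w
    have h := huAJ (uAi w)
    rw [hA1 w] at h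
    have := congrArg uAi h
    rw [hA2] at this
    exact this.symm
  rw [← SetLike.mem_coe, ← VonNeumannAlgebra.centralizer_centralizer M]
  rw [Set.mem_centralizer_iff]
  intro y hy
  have hy' : y ∈ M.commutant := by
    rw [← SetLike.mem_coe, VonNeumannAlgebra.coe_commutant]
    exact hy
  obtain ⟨x, hxA, hxy⟩ := sf.commutant_JMJ y hy'
  have hx'A : uA * x * uAi ∈ M := hγ x hxA
  obtain ⟨y', hy'', hx'y'⟩ := sf.JMJ_commutant (uA * x * uAi) hx'A
  ext v
  simp only [ContinuousLinearMap.mul_apply]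
  -- goal : y (uAi (a (uA v))) = uAi (a (uA (y v)))
  have step1 : uA (y v) = y' (uA v) := by
    rw [← hxy v, huAJ, ← hx'y' (uA v)]
    simp only [ContinuousLinearMap.mul_apply]
    congr 1
    rw [huAiJ, hA2]
  have step2 : a (y' (uA v)) = y' (a (uA v)) := by
    rw [VonNeumannAlgebra.mem_commutant_iff] at hy''
    have := hy'' a ha
    have happ := congrArg (fun f : H →L[ℂ] H => f (uA v)) this
    simpa using happ
  have step3 : y (uAi (a (uA v))) = uAi (y' (a (uA v))) := by
    rw [← hxy (uAi (a (uA v))), ← hx'y' (a (uA v))]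
    simp only [ContinuousLinearMap.mul_apply]
    rw [huAiJ, hA2, huAiJ]
  rw [step1, step2, step3]

end StandardForm

end Aux

/-- Let `γ` be an automorphism of `A` preserving `B`, with canonical unitary
implementations `u_A(γ)` on `L²(A)` and `u_B(γ)` on `L²(B)` (cone-preserving, `J`-commuting
unitaries implementing `γ`). Then (i) `p ∘ u_A(γ) = u_B(γ) ∘ p` on `L²(A)⁺`, and (ii) for
every normal conditional expectation `E : A → B` one has
`q_{γ·E} = u_A(γ) ∘ q_E ∘ u_B(γ)*`, where `γ·E = γ ∘ E ∘ γ⁻¹`. -/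
theorem canonical_implementation_compat
    {HA HB : Type*}
    [NormedAddCommGroup HA] [InnerProductSpace ℂ HA] [CompleteSpace HA]
    [NormedAddCommGroup HB] [InnerProductSpace ℂ HB] [CompleteSpace HB]
    (A : VonNeumannAlgebra HA) (B : VonNeumannAlgebra HA)
    (hBA : ∀ x : HA →L[ℂ] HA, x ∈ B → x ∈ A)
    (sfA : StandardForm A)
    (B' : VonNeumannAlgebra HB) (sfB : StandardForm B')
    -- Φ is a normal *-isomorphism of B onto B', identifying the standard form of B on HB
    (Φ : (HA →L[ℂ] HA) → (HB →L[ℂ] HB))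
    (hΦ_one : Φ 1 = 1)
    (hΦ_add : ∀ b₁ ∈ B, ∀ b₂ ∈ B, Φ (b₁ + b₂) = Φ b₁ + Φ b₂)
    (hΦ_smul : ∀ c : ℂ, ∀ b ∈ B, Φ (c • b) = c • Φ b)
    (hΦ_mul : ∀ b₁ ∈ B, ∀ b₂ ∈ B, Φ (b₁ * b₂) = Φ b₁ * Φ b₂)
    (hΦ_star : ∀ b ∈ B, Φ (star b) = star (Φ b))
    (hΦ_mem : ∀ b ∈ B, Φ b ∈ B')
    (hΦ_surj : ∀ y : HB →L[ℂ] HB, y ∈ B' → ∃ b ∈ B, Φ b = y)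
    (hΦ_inj : ∀ b₁ ∈ B, ∀ b₂ ∈ B, Φ b₁ = Φ b₂ → b₁ = b₂)
    -- p : L²(A)⁺ → L²(B)⁺, the restriction map on square roots of positive normal forms
    (p : HA → HB)
    (hp_mem : ∀ ξ ∈ sfA.P, p ξ ∈ sfB.P)
    (hp_def : ∀ ξ ∈ sfA.P, ∀ b ∈ B, (inner ℂ ξ (b ξ) : ℂ) = inner ℂ (p ξ) (Φ b (p ξ)))
    -- uA = u_A(γ) : the canonical implementation of γ on L²(A), with inverse uAi
    (uA uAi : HA →L[ℂ] HA)
    (huA1 : uA * uAi = 1) (huA2 : uAi * uA = 1)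
    (huAad : ContinuousLinearMap.adjoint uA = uAi)
    (huAP : ∀ ξ ∈ sfA.P, uA ξ ∈ sfA.P)
    (huAJ : ∀ ξ : HA, uA (sfA.J ξ) = sfA.J (uA ξ))
    (hγA : ∀ a ∈ A, uA * a * uAi ∈ A)
    (hγB : ∀ b ∈ B, uA * b * uAi ∈ B)
    -- uB = u_B(γ) : the canonical implementation of γ|_B on L²(B), with inverse uBi
    (uB uBi : HB →L[ℂ] HB)
    (huB1 : uB * uBi = 1) (huB2 : uBi * uB = 1)
    (huBad : ContinuousLinearMap.adjoint uB = uBi)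
    (huBP : ∀ ξ ∈ sfB.P, uB ξ ∈ sfB.P)
    (huBJ : ∀ ξ : HB, uB (sfB.J ξ) = sfB.J (uB ξ))
    -- uB implements on L²(B) the restriction of γ to B
    (hcompat : ∀ b ∈ B, Φ (uA * b * uAi) = uB * Φ b * uBi) :
    -- (i) p ∘ u_A(γ) = u_B(γ) ∘ p on L²(A)⁺
    (∀ ξ ∈ sfA.P, p (uA ξ) = uB (p ξ)) ∧
    -- (ii) for any normal conditional expectation E, q_{γ·E} = u_A(γ) ∘ q_E ∘ u_B(γ)*
    (∀ (E : (HA →L[ℂ] HA) →ₗ[ℂ] (HA →L[ℂ] HA)),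
      (∀ a ∈ A, E a ∈ B) → (∀ b ∈ B, E b = b) →
      (∀ a : HA →L[ℂ] HA, a.IsPositive → (E a).IsPositive) →
      (∀ a : HA →L[ℂ] HA, ‖E a‖ ≤ ‖a‖) →
      (∀ b₁ ∈ B, ∀ b₂ ∈ B, ∀ a ∈ A, E (b₁ * a * b₂) = b₁ * E a * b₂) →
      ∀ (q q' : HB →L[ℂ] HA),
        -- q = q_E, the canonical positive isometry associated with E
        (∀ ξ ∈ sfB.P, q ξ ∈ sfA.P) → (∀ ξ : HB, ‖q ξ‖ = ‖ξ‖) →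
        (∀ a ∈ A, ∀ ξ η : HB, (inner ℂ ξ (Φ (E a) η) : ℂ) = inner ℂ (q ξ) (a (q η))) →
        -- q' = q_{γ·E}, the canonical positive isometry associated with γ·E = γ∘E∘γ⁻¹
        (∀ ξ ∈ sfB.P, q' ξ ∈ sfA.P) → (∀ ξ : HB, ‖q' ξ‖ = ‖ξ‖) →
        (∀ a ∈ A, ∀ ξ η : HB,
          (inner ℂ ξ (Φ (uA * E (uAi * a * uA) * uAi) η) : ℂ) = inner ℂ (q' ξ) (a (q' η))) →
        q' = (uA.comp q).comp uBi) := by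
  classical
  have huAad' : ContinuousLinearMap.adjoint uAi = uA := by
    rw [← huAad, ContinuousLinearMap.adjoint_adjoint]
  have huBad' : ContinuousLinearMap.adjoint uBi = uB := by
    rw [← huBad, ContinuousLinearMap.adjoint_adjoint]
  have hA2 : ∀ v : HA, uAi (uA v) = v := fun v => by
    have h : (uAi * uA) v = (1 : HA →L[ℂ] HA) v := by rw [huA2]
    simpa using h
  have hB1 : ∀ v : HB, uB (uBi v) = v := fun v => by
    have h : (uB * uBi) v = (1 : HB →L[ℂ] HB) v := by rw [huB1]
    simpa using h
  have huBiP : ∀ ζ ∈ sfB.P, uBi ζ ∈ sfB.P := by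
    intro ζ hζ
    refine (sfB.selfDual _).mpr fun w hw => ?_
    have e : (inner ℂ (uBi ζ) w : ℂ) = inner ℂ ζ (uB w) := by
      calc (inner ℂ (uBi ζ) w : ℂ)
          = inner ℂ (ContinuousLinearMap.adjoint uB ζ) w := by rw [huBad]
        _ = inner ℂ ζ (uB w) := ContinuousLinearMap.adjoint_inner_left uB w ζ
    rw [e]
    exact sfB.inner_nonneg hζ (huBP w hw)
  have part1 : ∀ ξ ∈ sfA.P, p (uA ξ) = uB (p ξ) := by
    intro ξ hξ
    have hη₁ : p (uA ξ) ∈ sfB.P := hp_mem _ (huAP ξ hξ)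
    have hkey : uBi (p (uA ξ)) = p ξ := by
      refine sfB.unique (huBiP _ hη₁) (hp_mem ξ hξ) ?_
      intro z hz
      obtain ⟨b, hb, rfl⟩ := hΦ_surj z hz
      have c1 : (inner ℂ (uBi (p (uA ξ))) (Φ b (uBi (p (uA ξ)))) : ℂ)
          = inner ℂ (p (uA ξ)) ((uB * Φ b * uBi) (p (uA ξ))) := by
        calc (inner ℂ (uBi (p (uA ξ))) (Φ b (uBi (p (uA ξ)))) : ℂ)
            = inner ℂ (ContinuousLinearMap.adjoint uB (p (uA ξ))) (Φ b (uBi (p (uA ξ)))) := by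
              rw [huBad]
          _ = inner ℂ (p (uA ξ)) (uB (Φ b (uBi (p (uA ξ))))) :=
              ContinuousLinearMap.adjoint_inner_left uB _ _
          _ = inner ℂ (p (uA ξ)) ((uB * Φ b * uBi) (p (uA ξ))) := by
              simp [ContinuousLinearMap.mul_apply]
      rw [c1, ← hcompat b hb, ← hp_def _ (huAP ξ hξ) _ (hγB b hb)]
      have c2 : (inner ℂ (uA ξ) ((uA * b * uAi) (uA ξ)) : ℂ) = inner ℂ ξ (b ξ) := by
        simp only [ContinuousLinearMap.mul_apply]
        rw [hA2]
        calc (inner ℂ (uA ξ) (uA (b ξ)) : ℂ)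
            = inner ℂ (ContinuousLinearMap.adjoint uAi ξ) (uA (b ξ)) := by rw [huAad']
          _ = inner ℂ ξ (uAi (uA (b ξ))) := ContinuousLinearMap.adjoint_inner_left uAi _ _
          _ = inner ℂ ξ (b ξ) := by rw [hA2]
      rw [c2, hp_def ξ hξ b hb]
    rw [← hkey, hB1]
  refine ⟨part1, ?_⟩
  intro E hEB hEid hEpos hEnorm hEbimod q q' hqP hqiso hq hq'P hq'iso hq'
  refine sfB.ext_of_agree_on_cone q' ((uA.comp q).comp uBi) ?_
  intro ξ hξ
  have hq''P : uA (q (uBi ξ)) ∈ sfA.P := huAP _ (hqP _ (huBiP ξ hξ))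
  have hmain : q' ξ = uA (q (uBi ξ)) := by
    refine sfA.unique (hq'P ξ hξ) hq''P ?_
    intro a ha
    have ha0 : uAi * a * uA ∈ A := sfA.conj_inv_mem uA uAi huA1 huA2 huAJ hγA ha
    have lhs : (inner ℂ (q' ξ) (a (q' ξ)) : ℂ)
        = inner ℂ ξ (Φ (uA * E (uAi * a * uA) * uAi) ξ) := (hq' a ha ξ ξ).symm
    have rhs : (inner ℂ (uA (q (uBi ξ))) (a (uA (q (uBi ξ)))) : ℂ)
        = inner ℂ ξ (Φ (uA * E (uAi * a * uA) * uAi) ξ) := by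
      have c1 : (inner ℂ (uA (q (uBi ξ))) (a (uA (q (uBi ξ)))) : ℂ)
          = inner ℂ (q (uBi ξ)) ((uAi * a * uA) (q (uBi ξ))) := by
        simp only [ContinuousLinearMap.mul_apply]
        calc (inner ℂ (uA (q (uBi ξ))) (a (uA (q (uBi ξ)))) : ℂ)
            = inner ℂ (ContinuousLinearMap.adjoint uAi (q (uBi ξ))) (a (uA (q (uBi ξ)))) := by
              rw [huAad']
          _ = inner ℂ (q (uBi ξ)) (uAi (a (uA (q (uBi ξ))))) :=
              ContinuousLinearMap.adjoint_inner_left uAi _ _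
      rw [c1, ← hq _ ha0 (uBi ξ) (uBi ξ), hcompat _ (hEB _ ha0)]
      calc (inner ℂ (uBi ξ) (Φ (E (uAi * a * uA)) (uBi ξ)) : ℂ)
          = inner ℂ (ContinuousLinearMap.adjoint uB ξ) (Φ (E (uAi * a * uA)) (uBi ξ)) := by
            rw [huBad]
        _ = inner ℂ ξ (uB (Φ (E (uAi * a * uA)) (uBi ξ))) :=
            ContinuousLinearMap.adjoint_inner_left uB _ _
        _ = inner ℂ ξ ((uB * Φ (E (uAi * a * uA)) * uBi) ξ) := by
            simp [ContinuousLinearMap.mul_apply]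
    rw [lhs]
    exact rhs.symm
  simpa using hmain
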